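/- Let F : ℝ^d → ℝ be differentiable with L-Lipschitz continuous gradient (L ≥ 0), let ν > 0, and let x ∈ ℝ^d. Let H be a symmetric positive-definite d×d real matrix with smallest eigenvalue λ_min > 0 and largest eigenvalue λ_max. If ‖∇F(x)‖ > (λ_max · L · ν · √d) / (2 · λ_min), then (H ∇^FD F(x))ᵀ (H ∇F(x)) > 0; i.e., the finite-difference quasi-Newton direction makes an acute angle with the true quasi-Newton direction. -/

import Mathlib

open MeasureTheory
open scoped RealInnerProductSpace

noncomputable def fdGrad {d : ℕ} (ν : ℝ) (g : EuclideanSpace ℝ (Fin d) → ℝ)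
    (x : EuclideanSpace ℝ (Fin d)) : EuclideanSpace ℝ (Fin d) :=
  (WithLp.equiv 2 (Fin d → ℝ)).symm
    fun j => (g (x + ν • EuclideanSpace.single j (1:ℝ)) - g x) / ν


noncomputable def mApp {d : ℕ} (H : Matrix (Fin d) (Fin d) ℝ) :
    EuclideanSpace ℝ (Fin d) →L[ℝ] EuclideanSpace ℝ (Fin d) :=
  Matrix.toEuclideanCLM (𝕜 := ℝ) H

variable {d : ℕ}

lemma inner_gradient (F : EuclideanSpace ℝ (Fin d) → ℝ) (x v : EuclideanSpace ℝ (Fin d)) :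
    ⟪gradient F x, v⟫ = fderiv ℝ F x v := by
  rw [gradient, InnerProductSpace.toDual_symm_apply]

lemma hasDeriv_line (F : EuclideanSpace ℝ (Fin d) → ℝ) (hF : Differentiable ℝ F)
    (x v : EuclideanSpace ℝ (Fin d)) (t : ℝ) :
    HasDerivAt (fun s : ℝ => F (x + s • v)) ⟪gradient F (x + t • v), v⟫ t := by
  have h1 : HasDerivAt (fun s : ℝ => x + s • v) v t := by
    simpa using ((hasDerivAt_id t).smul_const v).const_add x
  have h2 := (hF (x + t • v)).hasFDerivAt.comp_hasDerivAt t h1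
  rw [inner_gradient]
  exact h2

lemma quad_bound (L : ℝ) (hL : 0 ≤ L) (F : EuclideanSpace ℝ (Fin d) → ℝ)
    (hF : Differentiable ℝ F)
    (hLip : ∀ x y, ‖gradient F x - gradient F y‖ ≤ L * ‖x - y‖)
    (x v : EuclideanSpace ℝ (Fin d)) :
    |F (x + v) - F x - ⟪gradient F x, v⟫| ≤ L / 2 * ‖v‖ ^ 2 := by
  set φ' : ℝ → ℝ := fun t => ⟪gradient F (x + t • v), v⟫ with hφ'
  have hgc : Continuous (gradient F) := by
    have : LipschitzWith ⟨L, hL⟩ (gradient F) :=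
      LipschitzWith.of_dist_le_mul (fun a b => by
        rw [dist_eq_norm, dist_eq_norm]; exact hLip a b)
    exact this.continuous
  have hc : Continuous φ' := by
    apply Continuous.inner
    · exact hgc.comp (continuous_const.add (continuous_id.smul continuous_const))
    · exact continuous_const
  have hFTC : ∫ t in (0:ℝ)..1, φ' t = F (x + v) - F x := by
    have := intervalIntegral.integral_eq_sub_of_hasDerivAt
      (f := fun s : ℝ => F (x + s • v)) (f' := φ')
      (fun t _ => hasDeriv_line F hF x v t) (hc.intervalIntegrable 0 1)
    simpa using this
  have hφ'0 : φ' 0 = ⟪gradient F x, v⟫ := by simp [hφ']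
  have key : F (x + v) - F x - ⟪gradient F x, v⟫ = ∫ t in (0:ℝ)..1, (φ' t - φ' 0) := by
    rw [intervalIntegral.integral_sub (hc.intervalIntegrable 0 1)
      (intervalIntegrable_const), hFTC, hφ'0]
    simp
  rw [key]
  have hb : ∀ t ∈ Set.uIoc (0:ℝ) 1, ‖φ' t - φ' 0‖ ≤ L * t * ‖v‖ ^ 2 := by
    intro t ht
    rw [Set.uIoc_of_le zero_le_one] at ht
    have h1 : φ' t - φ' 0 = ⟪gradient F (x + t • v) - gradient F x, v⟫ := by
      simp [hφ', inner_sub_left]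
    rw [h1, Real.norm_eq_abs]
    calc |⟪gradient F (x + t • v) - gradient F x, v⟫|
        ≤ ‖gradient F (x + t • v) - gradient F x‖ * ‖v‖ := abs_real_inner_le_norm _ _
      _ ≤ (L * ‖(x + t • v) - x‖) * ‖v‖ := by
          gcongr; exact hLip _ _
      _ = L * t * ‖v‖ ^ 2 := by
          rw [add_sub_cancel_left, norm_smul, Real.norm_eq_abs,
            abs_of_pos ht.1]
          ring
  have h2 : (∫ t in (0:ℝ)..1, L * t * ‖v‖ ^ 2) = L / 2 * ‖v‖ ^ 2 := by
    rw [intervalIntegral.integral_mul_const, intervalIntegral.integral_const_mul,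
      integral_id]
    ring
  have h1 := intervalIntegral.norm_integral_le_of_norm_le
    (f := fun t => φ' t - φ' 0) (μ := volume) (a := 0) (b := 1)
    zero_le_one (Filter.Eventually.of_forall fun t ht => hb t (by rw [Set.uIoc_of_le zero_le_one]; exact ht))
    ((continuous_const.mul continuous_id |>.mul continuous_const).intervalIntegrable 0 1)
  rw [← Real.norm_eq_abs]
  refine h1.trans ?_
  rw [h2]

lemma fd_err (L ν : ℝ) (hL : 0 ≤ L) (hν : 0 < ν) (F : EuclideanSpace ℝ (Fin d) → ℝ)
    (hF : Differentiable ℝ F)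
    (hLip : ∀ x y, ‖gradient F x - gradient F y‖ ≤ L * ‖x - y‖)
    (x : EuclideanSpace ℝ (Fin d)) :
    ‖fdGrad ν F x - gradient F x‖ ≤ L * ν * Real.sqrt d / 2 := by
  have hcoord : ∀ j : Fin d, |(fdGrad ν F x - gradient F x) j| ≤ L * ν / 2 := by
    intro j
    set v : EuclideanSpace ℝ (Fin d) := ν • EuclideanSpace.single j (1:ℝ) with hv
    have hnv : ‖v‖ = ν := by
      simp [hv, norm_smul, abs_of_pos hν]
    have hinner : ⟪gradient F x, v⟫ = ν * (gradient F x) j := by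
      rw [hv, real_inner_smul_right, EuclideanSpace.inner_single_right]
      simp [mul_comm]
    have hq := quad_bound L hL F hF hLip x v
    have hval : (fdGrad ν F x - gradient F x) j
        = (F (x + v) - F x - ⟪gradient F x, v⟫) / ν := by
      have : (fdGrad ν F x - gradient F x) j
          = (F (x + v) - F x) / ν - (gradient F x) j := rfl
      rw [this, hinner]
      field_simp
    rw [hval, abs_div, abs_of_pos hν, div_le_iff₀ hν]
    calc |F (x + v) - F x - ⟪gradient F x, v⟫| ≤ L / 2 * ‖v‖ ^ 2 := hq
      _ = L * ν / 2 * ν := by rw [hnv]; ring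
  rw [EuclideanSpace.norm_eq]
  have hsum : (∑ j, ‖(fdGrad ν F x - gradient F x) j‖ ^ 2)
      ≤ ∑ _j : Fin d, (L * ν / 2) ^ 2 := by
    apply Finset.sum_le_sum
    intro j _
    have := hcoord j
    rw [Real.norm_eq_abs]
    nlinarith [abs_nonneg ((fdGrad ν F x - gradient F x) j)]
  calc Real.sqrt (∑ j, ‖(fdGrad ν F x - gradient F x) j‖ ^ 2)
      ≤ Real.sqrt (∑ _j : Fin d, (L * ν / 2) ^ 2) := Real.sqrt_le_sqrt hsum
    _ = L * ν * Real.sqrt d / 2 := by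
        rw [Finset.sum_const, Finset.card_univ, Fintype.card_fin, nsmul_eq_mul,
          Real.sqrt_mul (by positivity), Real.sqrt_sq (by positivity)]
        ring

section eig
variable {H : Matrix (Fin d) (Fin d) ℝ} (hH : H.IsHermitian)

lemma mApp_eigen (j : Fin d) :
    mApp H (hH.eigenvectorBasis j) = hH.eigenvalues j • hH.eigenvectorBasis j := by
  apply (WithLp.equiv 2 (Fin d → ℝ)).injective
  have h1 := Matrix.ofLp_toEuclideanCLM (𝕜 := ℝ) H (hH.eigenvectorBasis j)
  have h2 := hH.mulVec_eigenvectorBasis j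
  exact h1.trans h2

lemma mApp_symm (hH : H.IsHermitian) (u w : EuclideanSpace ℝ (Fin d)) :
    ⟪mApp H u, w⟫ = ⟪u, mApp H w⟫ := by
  have hS := (Matrix.isHermitian_iff_isSymmetric.1 hH)
  have : ∀ z, mApp H z = Matrix.toEuclideanLin H z := fun z => by
    rw [mApp, ← Matrix.coe_toEuclideanCLM_eq_toEuclideanLin]; rfl
  rw [this, this, hS u w]

lemma inner_basis_mApp (w : EuclideanSpace ℝ (Fin d)) (j : Fin d) :
    ⟪hH.eigenvectorBasis j, mApp H w⟫ = hH.eigenvalues j * ⟪hH.eigenvectorBasis j, w⟫ := by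
  rw [← mApp_symm hH, mApp_eigen hH, real_inner_smul_left]

lemma normsq_basis (u : EuclideanSpace ℝ (Fin d)) :
    ‖u‖ ^ 2 = ∑ j, ⟪hH.eigenvectorBasis j, u⟫ ^ 2 := by
  rw [← real_inner_self_eq_norm_sq, ← OrthonormalBasis.sum_inner_mul_inner
    (hH.eigenvectorBasis) u u]
  congr 1
  funext j
  rw [real_inner_comm u, sq]

lemma mApp_le (lamMin lamMax : ℝ) (hlamMin : 0 < lamMin)
    (hMin : IsLeast (Set.range hH.eigenvalues) lamMin)
    (hMax : IsGreatest (Set.range hH.eigenvalues) lamMax)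
    (w : EuclideanSpace ℝ (Fin d)) :
    ‖mApp H w‖ ≤ lamMax * ‖w‖ := by
  have hmaxpos : 0 < lamMax := lt_of_lt_of_le hlamMin (hMax.2 hMin.1)
  have hsq : ‖mApp H w‖ ^ 2 ≤ (lamMax * ‖w‖) ^ 2 := by
    rw [normsq_basis hH (mApp H w), mul_pow, normsq_basis hH w, Finset.mul_sum]
    apply Finset.sum_le_sum
    intro j _
    rw [inner_basis_mApp hH, mul_pow]
    have h1 : hH.eigenvalues j ≤ lamMax := hMax.2 ⟨j, rfl⟩
    have h2 : lamMin ≤ hH.eigenvalues j := hMin.2 ⟨j, rfl⟩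
    have h3 : hH.eigenvalues j ^ 2 ≤ lamMax ^ 2 := by nlinarith
    exact mul_le_mul_of_nonneg_right h3 (sq_nonneg _)
  calc ‖mApp H w‖ = Real.sqrt (‖mApp H w‖ ^ 2) := (Real.sqrt_sq (norm_nonneg _)).symm
    _ ≤ Real.sqrt ((lamMax * ‖w‖) ^ 2) := Real.sqrt_le_sqrt hsq
    _ = lamMax * ‖w‖ := Real.sqrt_sq (by positivity)

lemma mApp_ge (lamMin lamMax : ℝ) (hlamMin : 0 < lamMin)
    (hMin : IsLeast (Set.range hH.eigenvalues) lamMin)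
    (hMax : IsGreatest (Set.range hH.eigenvalues) lamMax)
    (w : EuclideanSpace ℝ (Fin d)) :
    lamMin * ‖w‖ ≤ ‖mApp H w‖ := by
  have hsq : (lamMin * ‖w‖) ^ 2 ≤ ‖mApp H w‖ ^ 2 := by
    rw [normsq_basis hH (mApp H w), mul_pow, normsq_basis hH w, Finset.mul_sum]
    apply Finset.sum_le_sum
    intro j _
    rw [inner_basis_mApp hH, mul_pow]
    have h2 : lamMin ≤ hH.eigenvalues j := hMin.2 ⟨j, rfl⟩
    have h3 : lamMin ^ 2 ≤ hH.eigenvalues j ^ 2 := by nlinarith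
    exact mul_le_mul_of_nonneg_right h3 (sq_nonneg _)
  calc lamMin * ‖w‖ = Real.sqrt ((lamMin * ‖w‖) ^ 2) := (Real.sqrt_sq (by positivity)).symm
    _ ≤ Real.sqrt (‖mApp H w‖ ^ 2) := Real.sqrt_le_sqrt hsq
    _ = ‖mApp H w‖ := Real.sqrt_sq (norm_nonneg _)

end eig

theorem stmt7 {d : ℕ} (L ν : ℝ) (hL : 0 ≤ L) (hν : 0 < ν)
    (F : EuclideanSpace ℝ (Fin d) → ℝ) (hF : Differentiable ℝ F)
    (hLip : ∀ x y, ‖gradient F x - gradient F y‖ ≤ L * ‖x - y‖)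
    (x : EuclideanSpace ℝ (Fin d))
    (H : Matrix (Fin d) (Fin d) ℝ) (hH : H.IsHermitian) (hPD : H.PosDef)
    (lamMin lamMax : ℝ) (hlamMin : 0 < lamMin)
    (hMin : IsLeast (Set.range hH.eigenvalues) lamMin)
    (hMax : IsGreatest (Set.range hH.eigenvalues) lamMax)
    (hgrad : ‖gradient F x‖ > lamMax * L * ν * Real.sqrt d / (2 * lamMin)) :
    0 < ⟪mApp H (fdGrad ν F x), mApp H (gradient F x)⟫ := by
  set g := gradient F x with hg
  set e := fdGrad ν F x - g with he
  have hmaxpos : 0 < lamMax := lt_of_lt_of_le hlamMin (hMax.2 hMin.1)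
  set c := lamMax * L * ν * Real.sqrt d / 2 with hc
  have hcnn : 0 ≤ c := by positivity
  -- ‖mApp H e‖ ≤ c
  have he1 : ‖e‖ ≤ L * ν * Real.sqrt d / 2 := fd_err L ν hL hν F hF hLip x
  have he2 : ‖mApp H e‖ ≤ c := by
    calc ‖mApp H e‖ ≤ lamMax * ‖e‖ := mApp_le hH lamMin lamMax hlamMin hMin hMax e
      _ ≤ lamMax * (L * ν * Real.sqrt d / 2) := by
          exact mul_le_mul_of_nonneg_left he1 hmaxpos.le
      _ = c := by rw [hc]; ring
  -- ‖mApp H g‖ > c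
  have hu : c < ‖mApp H g‖ := by
    have h1 : lamMin * ‖g‖ ≤ ‖mApp H g‖ := mApp_ge hH lamMin lamMax hlamMin hMin hMax g
    have h2 : c < lamMin * ‖g‖ := by
      have := (div_lt_iff₀ (by positivity : (0:ℝ) < 2 * lamMin)).1 hgrad
      -- hgrad : lamMax*L*ν*√d / (2*lamMin) < ‖g‖
      rw [hc]
      nlinarith [hgrad, hlamMin]
    linarith
  have hfd : fdGrad ν F x = e + g := by rw [he]; abel
  have hexp : ⟪mApp H (fdGrad ν F x), mApp H g⟫
      = ⟪mApp H e, mApp H g⟫ + ‖mApp H g‖ ^ 2 := by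
    rw [hfd, map_add, inner_add_left, real_inner_self_eq_norm_sq]
  rw [hexp]
  have hip : |⟪mApp H e, mApp H g⟫| ≤ ‖mApp H e‖ * ‖mApp H g‖ :=
    abs_real_inner_le_norm _ _
  have hupos : 0 < ‖mApp H g‖ := lt_of_le_of_lt hcnn hu
  nlinarith [abs_le.1 hip, mul_le_mul_of_nonneg_right he2 hupos.le]
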